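/- arXiv:math/0512467 — 3 statements merged into one kernel-verified Lean document; each statement's English description precedes it below -/
import Mathlib

section
/- Let A be a commutative ℚ-algebra and let H(z) = z - Σ_{j≥2} B_j z^{1-j} and L(ζ) = ζ + Σ_{j≥2} R_j ζ^{1-j} be formal series at infinity over A that are compositional inverses of each other (H(L(ζ)) = ζ). Then for every integer k ≥ 1, the coefficient R_{k+1} of L satisfies R_{k+1} = -(1/k) · [z^{-1}] H(z)^k, where [z^{-1}] denotes the residue (coefficient of z^{-1}). -/
noncomputable section

variable {A : Type*}

/-- The formal derivative `d/dz` of a formal series at infinity. A series at infinity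
`f(z) = Σ_{n ≤ N} a_n z^n` is modeled as a `LaurentSeries` in the variable `w = 1/z`,
so that the coefficient of `z^n` is `f.coeff (-n)`; the derivative satisfies
`(derivZ f).coeff m = (1 - m) • f.coeff (m - 1)`. -/
noncomputable def derivZ [CommRing A] (f : LaurentSeries A) : LaurentSeries A where
  coeff m := (1 - m) • f.coeff (m - 1)
  isPWO_support' := by
    refine (f.isPWO_support.image_of_monotone (f := fun n => n + 1)
      (fun a b hab => by simpa using hab)).mono ?_
    intro m hm
    have hf : f.coeff (m - 1) ≠ 0 := by
      intro h
      simp [Function.mem_support, h] at hm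
    exact ⟨m - 1, by simpa [HahnSeries.mem_support] using hf, by ring⟩

/-- `IsSumOf g F` asserts that the formal series at infinity `g` is the coefficientwise
convergent sum `Σ_{r ≥ 0} F r`: for each coefficient, the partial sums eventually stabilize. -/
def IsSumOf [CommRing A] (g : LaurentSeries A) (F : ℕ → LaurentSeries A) : Prop :=
  ∀ m : ℤ, ∃ N : ℕ, ∀ n : ℕ, N ≤ n → g.coeff m = (∑ r ∈ Finset.range n, F r).coeff m

namespace FCAux

open HahnSeries Finset

variable [CommRing A]

lemma derivZ_coeff (f : LaurentSeries A) (m : ℤ) :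
    (derivZ f).coeff m = (1 - m) • f.coeff (m - 1) := rfl

/-- "lower bound": coefficients vanish strictly below `a`. -/
def LB (f : LaurentSeries A) (a : ℤ) : Prop := ∀ m : ℤ, m < a → f.coeff m = 0

lemma LB.mono {f : LaurentSeries A} {a b : ℤ} (h : LB f a) (hba : b ≤ a) : LB f b :=
  fun m hm => h m (lt_of_lt_of_le hm hba)

lemma LB.add {f g : LaurentSeries A} {a : ℤ} (hf : LB f a) (hg : LB g a) : LB (f + g) a :=
  fun m hm => by rw [HahnSeries.coeff_add, hf m hm, hg m hm, add_zero]

lemma LB.mul {f g : LaurentSeries A} {a b : ℤ} (hf : LB f a) (hg : LB g b) :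
    LB (f * g) (a + b) := by
  intro m hm
  rw [HahnSeries.coeff_mul]
  apply Finset.sum_eq_zero
  rintro ⟨i, j⟩ hij
  rw [Finset.mem_addAntidiagonal] at hij
  exfalso
  have hi : a ≤ i := by
    by_contra h
    exact hij.1 (hf i (by omega))
  have hj : b ≤ j := by
    by_contra h
    exact hij.2.1 (hg j (by omega))
  omega

lemma LB.smul {f : LaurentSeries A} {a : ℤ} [Algebra ℚ A] (q : ℚ) (hf : LB f a) :
    LB (q • f) a := fun m hm => by
  rw [HahnSeries.coeff_smul, hf m hm, smul_zero]

lemma LB.pow {f : LaurentSeries A} {a : ℤ} (hf : LB f a) (r : ℕ) :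
    LB (f ^ r) ((r : ℤ) * a) := by
  induction r with
  | zero =>
    intro m hm
    rw [pow_zero]
    rw [HahnSeries.coeff_one]
    simp only [Nat.cast_zero, zero_mul] at hm
    exact if_neg (by omega)
  | succ n ih =>
    have := ih.mul hf
    rw [pow_succ]
    exact this.mono (by push_cast; ring_nf; omega)

lemma LB.derivZ {f : LaurentSeries A} {a : ℤ} (hf : LB f a) : LB (derivZ f) (a + 1) := by
  intro m hm
  rw [derivZ_coeff, hf (m - 1) (by omega), smul_zero]

lemma coeff_sum {ι : Type*} (s : Finset ι) (f : ι → LaurentSeries A) (m : ℤ) :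
    (∑ i ∈ s, f i).coeff m = ∑ i ∈ s, (f i).coeff m := by
  classical
  induction s using Finset.induction with
  | empty => simp
  | insert a s h ih => rw [Finset.sum_insert h, Finset.sum_insert h, HahnSeries.coeff_add, ih]

lemma LB.sum {ι : Type*} {s : Finset ι} {f : ι → LaurentSeries A} {a : ℤ}
    (h : ∀ i ∈ s, LB (f i) a) : LB (∑ i ∈ s, f i) a := by
  intro m hm
  rw [coeff_sum]
  exact Finset.sum_eq_zero fun i hi => h i hi m hm

lemma mul_coeff_congr_left {f₁ f₂ g : LaurentSeries A} {b c m : ℤ}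
    (h : ∀ i, i ≤ c → f₁.coeff i = f₂.coeff i) (hg : LB g b) (hm : m ≤ c + b) :
    (f₁ * g).coeff m = (f₂ * g).coeff m := by
  have hsub : LB (f₁ - f₂) (c + 1) := by
    intro i hi
    rw [HahnSeries.coeff_sub, h i (by omega), sub_self]
  have h0 : ((f₁ - f₂) * g).coeff m = 0 := (hsub.mul hg) m (by omega)
  rw [sub_mul, HahnSeries.coeff_sub] at h0
  exact sub_eq_zero.mp h0

/-- The negated Euler operator. -/
def eulerE (f : LaurentSeries A) : LaurentSeries A where
  coeff m := (-m) • f.coeff m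
  isPWO_support' := f.isPWO_support.mono (fun m hm => by
    simp only [Function.mem_support] at hm ⊢
    intro h
    rw [h, smul_zero] at hm
    exact hm rfl)

lemma eulerE_coeff (f : LaurentSeries A) (m : ℤ) : (eulerE f).coeff m = (-m) • f.coeff m := rfl

lemma eulerE_support (f : LaurentSeries A) : (eulerE f).support ⊆ f.support := by
  intro m hm
  simp only [HahnSeries.mem_support, eulerE_coeff] at hm ⊢
  intro h
  rw [h, smul_zero] at hm
  exact hm rfl

lemma eulerE_mul (f g : LaurentSeries A) : eulerE (f * g) = eulerE f * g + f * eulerE g := by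
  ext m
  rw [HahnSeries.coeff_add,
    HahnSeries.coeff_mul_left' f.isPWO_support (eulerE_support f),
    HahnSeries.coeff_mul_right' g.isPWO_support (eulerE_support g),
    eulerE_coeff, HahnSeries.coeff_mul, Finset.smul_sum, ← Finset.sum_add_distrib]
  apply Finset.sum_congr rfl
  rintro ⟨i, j⟩ hij
  rw [Finset.mem_addAntidiagonal] at hij
  obtain ⟨-, -, hsum⟩ := hij
  rw [eulerE_coeff, eulerE_coeff, smul_mul_assoc, mul_smul_comm, ← add_smul]
  rw [← hsum]
  congr 1
  ring

lemma derivZ_eq (f : LaurentSeries A) :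
    derivZ f = (HahnSeries.single (1 : ℤ) (1 : A)) * eulerE f := by
  ext m
  have h1 : m = (m - 1) + 1 := by ring
  calc (derivZ f).coeff m = (1 - m) • f.coeff (m - 1) := rfl
    _ = (-(m - 1)) • f.coeff (m - 1) := by rw [neg_sub]
    _ = 1 * (eulerE f).coeff (m - 1) := by rw [eulerE_coeff, one_mul]
    _ = ((HahnSeries.single (1 : ℤ) (1 : A)) * eulerE f).coeff ((m - 1) + 1) :=
        (HahnSeries.coeff_single_mul_add).symm
    _ = _ := by rw [← h1]

lemma derivZ_mul (f g : LaurentSeries A) :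
    derivZ (f * g) = derivZ f * g + f * derivZ g := by
  rw [derivZ_eq, derivZ_eq, derivZ_eq, eulerE_mul]
  ring

lemma derivZ_add (f g : LaurentSeries A) : derivZ (f + g) = derivZ f + derivZ g := by
  ext m
  rw [derivZ_coeff, HahnSeries.coeff_add, HahnSeries.coeff_add, derivZ_coeff, derivZ_coeff,
    smul_add]

lemma derivZ_zero : derivZ (0 : LaurentSeries A) = 0 := by
  ext m
  rw [derivZ_coeff]
  simp

lemma derivZ_sum {ι : Type*} (s : Finset ι) (f : ι → LaurentSeries A) :
    derivZ (∑ i ∈ s, f i) = ∑ i ∈ s, derivZ (f i) := by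
  classical
  induction s using Finset.induction with
  | empty => simpa using derivZ_zero
  | insert a s h ih => rw [Finset.sum_insert h, Finset.sum_insert h, derivZ_add, ih]

lemma derivZ_nsmul (c : ℕ) (f : LaurentSeries A) : derivZ (c • f) = c • derivZ f := by
  induction c with
  | zero => simpa using derivZ_zero
  | succ n ih => rw [succ_nsmul, succ_nsmul, derivZ_add, ih]

lemma derivZ_qsmul [Algebra ℚ A] (q : ℚ) (f : LaurentSeries A) :
    derivZ (q • f) = q • derivZ f := by
  ext m
  rw [derivZ_coeff]
  simp only [HahnSeries.coeff_smul]
  rw [derivZ_coeff, smul_comm]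

lemma derivZ_pow_succ (f : LaurentSeries A) (r : ℕ) :
    derivZ (f ^ (r + 1)) = (r + 1) • (f ^ r * derivZ f) := by
  induction r with
  | zero => simp
  | succ n ih =>
    rw [pow_succ, derivZ_mul, ih, smul_mul_assoc]
    have h1 : f ^ n * derivZ f * f = f ^ (n + 1) * derivZ f := by ring
    rw [h1, succ_nsmul (f ^ (n + 1) * derivZ f) (n + 1)]

lemma derivZ_iterate_mul (p q : LaurentSeries A) (n : ℕ) :
    derivZ^[n] (p * q) =
      ∑ k ∈ range n.succ, (n.choose k • (derivZ^[n - k] p * derivZ^[k] q)) := by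
  induction n with
  | zero =>
    rw [Finset.sum_range_one]
    show p * q = Nat.choose 0 0 • (derivZ^[0 - 0] p * derivZ^[0] q)
    rw [Nat.choose_self, Nat.sub_self, Function.iterate_zero_apply, Function.iterate_zero_apply,
      one_smul]
  | succ n IH =>
    calc
      derivZ^[n + 1] (p * q) =
          derivZ (∑ k ∈ range n.succ,
              n.choose k • (derivZ^[n - k] p * derivZ^[k] q)) := by
        rw [Function.iterate_succ_apply', IH]
      _ = (∑ k ∈ range n.succ,
            n.choose k • (derivZ^[n - k + 1] p * derivZ^[k] q)) +
          ∑ k ∈ range n.succ,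
            n.choose k • (derivZ^[n - k] p * derivZ^[k + 1] q) := by
        simp_rw [derivZ_sum, derivZ_nsmul, derivZ_mul, Function.iterate_succ_apply',
          nsmul_add, sum_add_distrib]
      _ = (∑ k ∈ range n.succ,
                n.choose k.succ • (derivZ^[n - k] p * derivZ^[k + 1] q)) +
              1 • (derivZ^[n + 1] p * derivZ^[0] q) +
            ∑ k ∈ range n.succ, n.choose k • (derivZ^[n - k] p * derivZ^[k + 1] q) :=
        ?_
      _ = ((∑ k ∈ range n.succ, n.choose k • (derivZ^[n - k] p * derivZ^[k + 1] q)) +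
              ∑ k ∈ range n.succ,
                n.choose k.succ • (derivZ^[n - k] p * derivZ^[k + 1] q)) +
            1 • (derivZ^[n + 1] p * derivZ^[0] q) := by
        rw [add_comm, add_assoc]
      _ = (∑ i ∈ range n.succ,
              (n + 1).choose (i + 1) • (derivZ^[n + 1 - (i + 1)] p * derivZ^[i + 1] q)) +
            1 • (derivZ^[n + 1] p * derivZ^[0] q) := by
        simp_rw [Nat.choose_succ_succ, Nat.succ_sub_succ, add_smul, sum_add_distrib]
      _ = ∑ k ∈ range n.succ.succ,
            n.succ.choose k • (derivZ^[n.succ - k] p * derivZ^[k] q) := by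
        rw [sum_range_succ' _ n.succ, Nat.choose_zero_right, tsub_zero]
    congr
    refine (sum_range_succ' _ _).trans (congr_arg₂ (· + ·) ?_ ?_)
    · rw [sum_range_succ, Nat.choose_succ_self, zero_smul, add_zero]
      refine sum_congr rfl fun k hk => ?_
      rw [mem_range] at hk
      congr
      omega
    · rw [Nat.choose_zero_right, tsub_zero]

variable [Algebra ℚ A]

lemma qsmul_support_subset (q : ℚ) (x : LaurentSeries A) : (q • x).support ⊆ x.support := by
  intro m hm
  simp only [HahnSeries.mem_support, HahnSeries.coeff_smul] at hm ⊢
  intro h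
  rw [h, smul_zero] at hm
  exact hm rfl

lemma qsmul_mul (q : ℚ) (x y : LaurentSeries A) : (q • x) * y = q • (x * y) := by
  ext m
  rw [HahnSeries.coeff_mul_left' x.isPWO_support (qsmul_support_subset q x),
    HahnSeries.coeff_smul, HahnSeries.coeff_mul, Finset.smul_sum]
  exact Finset.sum_congr rfl fun ij _ => by rw [HahnSeries.coeff_smul, smul_mul_assoc]

instance : IsScalarTower ℚ (LaurentSeries A) (LaurentSeries A) :=
  ⟨fun q x y => by rw [smul_eq_mul, smul_eq_mul, qsmul_mul]⟩

instance : SMulCommClass ℚ (LaurentSeries A) (LaurentSeries A) :=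
  ⟨fun q x y => by
    simp only [smul_eq_mul]
    rw [mul_comm x (q • y), qsmul_mul, mul_comm y x]⟩

/-- The `r`-th term of the Taylor expansion of `f ∘ (id + ε)`. -/
def trm (ε f : LaurentSeries A) (r : ℕ) : LaurentSeries A :=
  ((Nat.factorial r : ℚ))⁻¹ • (ε ^ r * derivZ^[r] f)

lemma trm_mul (ε f g : LaurentSeries A) (r : ℕ) :
    trm ε (f * g) r = ∑ k ∈ range (r + 1), trm ε f (r - k) * trm ε g k := by
  rw [trm, derivZ_iterate_mul, Finset.mul_sum, Finset.smul_sum]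
  apply Finset.sum_congr rfl
  intro k hk
  rw [Finset.mem_range] at hk
  have hkr : k ≤ r := by omega
  rw [trm, trm]
  have hfact : (r.factorial : ℚ)⁻¹ * (r.choose k : ℚ) =
      ((r - k).factorial : ℚ)⁻¹ * ((k.factorial : ℚ))⁻¹ := by
    have h := Nat.choose_mul_factorial_mul_factorial hkr
    have h' : ((r.choose k : ℚ)) * (k.factorial : ℚ) * ((r - k).factorial : ℚ) =
        (r.factorial : ℚ) := by exact_mod_cast congrArg (Nat.cast : ℕ → ℚ) h
    have h1 : (r.factorial : ℚ) ≠ 0 := Nat.cast_ne_zero.mpr (Nat.factorial_ne_zero r)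
    have h2 : (k.factorial : ℚ) ≠ 0 := Nat.cast_ne_zero.mpr (Nat.factorial_ne_zero k)
    have h3 : ((r - k).factorial : ℚ) ≠ 0 := Nat.cast_ne_zero.mpr (Nat.factorial_ne_zero _)
    field_simp
    linear_combination h'
  rw [mul_smul_comm, ← Nat.cast_smul_eq_nsmul ℚ, smul_smul]
  rw [smul_mul_assoc, mul_smul_comm, smul_smul]
  rw [hfact]
  congr 1
  rw [mul_mul_mul_comm, ← _root_.pow_add, Nat.sub_add_cancel hkr]

lemma LB_iterate_derivZ {f : LaurentSeries A} {a : ℤ} (hf : LB f a) (r : ℕ) :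
    LB (derivZ^[r] f) (a + r) := by
  induction r with
  | zero => simpa using hf
  | succ n ih =>
    rw [Function.iterate_succ_apply']
    exact ih.derivZ.mono (by push_cast; omega)

lemma LB_trm {ε f : LaurentSeries A} {a : ℤ} (hε : LB ε 1) (hf : LB f a) (r : ℕ) :
    LB (trm ε f r) (a + 2 * r) := by
  have h1 : LB (ε ^ r) (r : ℤ) := (hε.pow r).mono (by omega)
  have h2 := LB_iterate_derivZ hf r
  exact (LB.smul _ (h1.mul h2)).mono (by omega)

lemma LB_partial {ε f : LaurentSeries A} {a : ℤ} (hε : LB ε 1) (hf : LB f a) (n : ℕ) :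
    LB (∑ r ∈ range n, trm ε f r) a :=
  LB.sum fun r _ => (LB_trm hε hf r).mono (by omega)

lemma LB_of_isSumOf {ε f F : LaurentSeries A} {a : ℤ} (hε : LB ε 1) (hf : LB f a)
    (hF : IsSumOf F (trm ε f)) : LB F a := by
  intro m hm
  obtain ⟨N, hN⟩ := hF m
  rw [hN N le_rfl]
  exact LB_partial hε hf N m hm

lemma sum_trm_mul (ε f g : LaurentSeries A) (n : ℕ) :
    ∑ r ∈ range n, trm ε (f * g) r =
      ∑ ij ∈ (range n ×ˢ range n).filter (fun ij => ij.1 + ij.2 < n),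
        trm ε f ij.1 * trm ε g ij.2 := by
  simp_rw [trm_mul]
  rw [Finset.sum_sigma']
  refine Finset.sum_nbij' (fun p => (p.1 - p.2, p.2)) (fun ij => ⟨ij.1 + ij.2, ij.2⟩)
    ?_ ?_ ?_ ?_ ?_
  · rintro ⟨r, k⟩ hp
    simp only [Finset.mem_sigma, Finset.mem_range] at hp
    simp only [Finset.mem_filter, Finset.mem_product, Finset.mem_range]
    omega
  · rintro ⟨i, j⟩ hij
    simp only [Finset.mem_filter, Finset.mem_product, Finset.mem_range] at hij
    simp only [Finset.mem_sigma, Finset.mem_range]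
    omega
  · rintro ⟨r, k⟩ hp
    simp only [Finset.mem_sigma, Finset.mem_range] at hp
    dsimp only
    simp only [Sigma.mk.inj_iff]
    exact ⟨by omega, HEq.rfl⟩
  · rintro ⟨i, j⟩ hij
    simp only [Finset.mem_filter, Finset.mem_product, Finset.mem_range] at hij
    simp only [Prod.mk.injEq]
    constructor
    · omega
    · trivial
  · rintro ⟨r, k⟩ _
    rfl

lemma isSumOf_mul {ε f g F G : LaurentSeries A} {a b : ℤ} (hε : LB ε 1)
    (hf : LB f a) (hg : LB g b)
    (hF : IsSumOf F (trm ε f)) (hG : IsSumOf G (trm ε g)) :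
    IsSumOf (F * G) (trm ε (f * g)) := by
  classical
  have hFa : LB F a := LB_of_isSumOf hε hf hF
  have hGb : LB G b := LB_of_isSumOf hε hg hG
  choose NF hNF using hF
  choose NG hNG using hG
  intro m
  refine ⟨(Finset.Icc a (m - b)).sup NF ⊔ (Finset.Icc b (m - a)).sup NG ⊔
    ((m - a - b).toNat + 1), fun n hn => ?_⟩
  have hnF : ∀ i : ℤ, a ≤ i → i ≤ m - b → NF i ≤ n := fun i h1 h2 =>
    le_trans (le_trans (Finset.le_sup (Finset.mem_Icc.mpr ⟨h1, h2⟩))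
      (le_sup_left.trans le_sup_left)) hn
  have hnG : ∀ j : ℤ, b ≤ j → j ≤ m - a → NG j ≤ n := fun j h1 h2 =>
    le_trans (le_trans (Finset.le_sup (Finset.mem_Icc.mpr ⟨h1, h2⟩))
      (le_sup_right.trans le_sup_left)) hn
  have hnT : (m - a - b).toNat + 1 ≤ n := le_trans le_sup_right hn
  set Sf := ∑ r ∈ range n, trm ε f r with hSf
  set Sg := ∑ r ∈ range n, trm ε g r with hSg
  have hSfLB : LB Sf a := LB_partial hε hf n
  have hSgLB : LB Sg b := LB_partial hε hg n
  have e1 : (F * G).coeff m = (Sf * G).coeff m := by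
    refine mul_coeff_congr_left (c := m - b) ?_ hGb (by omega)
    intro i hi
    by_cases hia : i < a
    · rw [hFa i hia, hSfLB i hia]
    · exact hNF i n (hnF i (by omega) hi)
  have e2 : (Sf * G).coeff m = (Sf * Sg).coeff m := by
    rw [mul_comm Sf G, mul_comm Sf Sg]
    refine mul_coeff_congr_left (c := m - a) ?_ hSfLB (by omega)
    intro j hj
    by_cases hjb : j < b
    · rw [hGb j hjb, hSgLB j hjb]
    · exact hNG j n (hnG j (by omega) hj)
  have e3 : (Sf * Sg).coeff m = (∑ r ∈ range n, trm ε (f * g) r).coeff m := by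
    have hzero : ∀ ij ∈ (range n ×ˢ range n).filter (fun ij => ¬ (ij.1 + ij.2 < n)),
        (trm ε f ij.1 * trm ε g ij.2).coeff m = 0 := by
      rintro ⟨i, j⟩ hij
      simp only [Finset.mem_filter, Finset.mem_product, Finset.mem_range, not_lt] at hij
      have hLB := (LB_trm hε hf i).mul (LB_trm hε hg j)
      refine hLB m ?_
      have h1 : ((m - a - b).toNat : ℤ) + 1 ≤ (n : ℤ) := by exact_mod_cast hnT
      have h2 : (n : ℤ) ≤ (i : ℤ) + (j : ℤ) := by exact_mod_cast hij.2
      omega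
    rw [sum_trm_mul, hSf, hSg, Finset.sum_mul_sum, ← Finset.sum_product', coeff_sum, coeff_sum,
      ← Finset.sum_filter_add_sum_filter_not (range n ×ˢ range n)
        (fun ij => ij.1 + ij.2 < n) (fun ij => (trm ε f ij.1 * trm ε g ij.2).coeff m),
      Finset.sum_eq_zero hzero, add_zero]
  rw [e1, e2, e3]

lemma trm_step (ε f : LaurentSeries A) (n : ℕ) :
    derivZ ((((n + 1).factorial : ℚ))⁻¹ • (ε ^ (n + 1) * derivZ^[n] f)) =
      trm ε f n * derivZ ε + trm ε f (n + 1) := by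
  rw [derivZ_qsmul, derivZ_mul, derivZ_pow_succ, smul_add]
  congr 1
  · rw [← Nat.cast_smul_eq_nsmul ℚ, smul_mul_assoc, smul_smul]
    have h1 : ((n.factorial : ℚ)) ≠ 0 := Nat.cast_ne_zero.mpr (Nat.factorial_ne_zero n)
    have hq : (((n + 1).factorial : ℚ))⁻¹ * ((n + 1 : ℕ) : ℚ) = ((n.factorial : ℚ))⁻¹ := by
      rw [Nat.factorial_succ]
      have h2 : ((n : ℚ) + 1) ≠ 0 := by positivity
      push_cast
      field_simp
    rw [hq, trm, smul_mul_assoc]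
    congr 1
    ring
  · rw [trm, Function.iterate_succ_apply']

lemma key_identity (ε f : LaurentSeries A) (n : ℕ) :
    (∑ r ∈ range n, trm ε f r) * (1 + derivZ ε) =
      derivZ (∑ r ∈ range n, (((r + 1).factorial : ℚ))⁻¹ • (ε ^ (r + 1) * derivZ^[r] f))
        + f - trm ε f n := by
  induction n with
  | zero =>
    simp [trm, derivZ_zero]
  | succ n ih =>
    rw [Finset.sum_range_succ, Finset.sum_range_succ, add_mul, ih, derivZ_add, trm_step]
    ring

lemma residue_of_isSumOf {ε f F : LaurentSeries A} {a : ℤ} (hε : LB ε 1) (hf : LB f a)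
    (hF : IsSumOf F (trm ε f)) :
    (F * (1 + derivZ ε)).coeff 1 = f.coeff 1 := by
  classical
  choose N hN using hF
  set n : ℕ := max ((Finset.Icc a 1).sup N) ((1 - a).toNat + 1) with hn
  have hcoeff : ∀ i : ℤ, i ≤ 1 → F.coeff i = (∑ r ∈ range n, trm ε f r).coeff i := by
    intro i hi
    by_cases hia : i < a
    · rw [LB_of_isSumOf hε hf (fun m => ⟨N m, hN m⟩) i hia, LB_partial hε hf n i hia]
    · push_neg at hia
      exact hN i n (le_trans (Finset.le_sup (Finset.mem_Icc.mpr ⟨hia, hi⟩)) (le_max_left _ _))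
  have hg : LB (1 + derivZ ε) 0 := by
    have h1 : LB (1 : LaurentSeries A) 0 := fun m hm => by
      rw [HahnSeries.coeff_one]; exact if_neg (by omega)
    exact h1.add ((hε.derivZ).mono (by omega))
  have e1 : (F * (1 + derivZ ε)).coeff 1 =
      ((∑ r ∈ range n, trm ε f r) * (1 + derivZ ε)).coeff 1 :=
    mul_coeff_congr_left (c := 1) hcoeff hg (by omega)
  rw [e1, key_identity, HahnSeries.coeff_sub, HahnSeries.coeff_add]
  have h2 : (derivZ (∑ r ∈ range n,
      (((r + 1).factorial : ℚ))⁻¹ • (ε ^ (r + 1) * derivZ^[r] f))).coeff 1 = 0 := by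
    rw [derivZ_coeff]
    simp
  have h3 : (trm ε f n).coeff 1 = 0 := by
    refine LB_trm hε hf n 1 ?_
    have hn' : (1 - a).toNat + 1 ≤ n := le_max_right _ _
    have hn'' : ((1 - a).toNat : ℤ) + 1 ≤ (n : ℤ) := by exact_mod_cast hn'
    omega
  rw [h2, h3, zero_add, sub_zero]

end FCAux

/-- Let `H(z) = z - Σ_{j≥2} B_j z^{1-j}` and
`L(ζ) = ζ + Σ_{j≥2} R_j ζ^{1-j}` be formal series at infinity over a commutative
`ℚ`-algebra `A` which are compositional inverses of each other, i.e.
`H(L(ζ)) = Σ_{r≥0} (L(ζ)-ζ)^r/r! · H^{(r)}(ζ) = ζ`.  (Series at infinity are modeled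
as Laurent series in `w = 1/z`, so `z` is `HahnSeries.single (-1) 1`, the coefficient
of `z^n` is `coeff (-n)`, and the residue `[z^{-1}]` is `coeff 1`.)
Then for every `k ≥ 1`, `R_{k+1} = -(1/k) · [z^{-1}] H(z)^k`. -/
theorem free_cumulant_residue_formula [CommRing A] [Algebra ℚ A]
    (B R : ℕ → A) (H L : LaurentSeries A)
    (hH : ∀ m : ℤ, H.coeff m =
      if m = -1 then 1 else if 1 ≤ m then -B (m + 1).toNat else 0)
    (hL : ∀ m : ℤ, L.coeff m =
      if m = -1 then 1 else if 1 ≤ m then R (m + 1).toNat else 0)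
    (hcomp : IsSumOf (HahnSeries.single (-1) 1)
      (fun r => ((Nat.factorial r : ℚ))⁻¹ •
        ((L - HahnSeries.single (-1) 1) ^ r * derivZ^[r] H)))
    (k : ℕ) (hk : 1 ≤ k) :
    R (k + 1) = -((k : ℚ))⁻¹ • (H ^ k).coeff 1 := by
  classical
  set ζ : LaurentSeries A := HahnSeries.single (-1) 1 with hζ
  set ε : LaurentSeries A := L - ζ with hε_def
  have hεLB : FCAux.LB ε 1 := by
    intro m hm
    rw [hε_def, HahnSeries.coeff_sub, hL m, hζ, HahnSeries.coeff_single]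
    by_cases h : m = -1
    · subst h; simp
    · rw [if_neg h, if_neg h, if_neg (by omega), sub_zero]
  have hHLB : FCAux.LB H (-1) := fun m hm => by
    rw [hH m, if_neg (by omega), if_neg (by omega)]
  have hDζ : derivZ ζ = 1 := by
    ext m
    rw [FCAux.derivZ_coeff, HahnSeries.coeff_one, hζ, HahnSeries.coeff_single]
    by_cases h : m = 0
    · subst h; norm_num
    · rw [if_neg (show m - 1 ≠ -1 by omega), smul_zero, if_neg h]
  have hDL : 1 + derivZ ε = derivZ L := by
    have hLd : L = ζ + ε := by rw [hε_def]; ring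
    rw [hLd, FCAux.derivZ_add, hDζ]
  have hcomp' : IsSumOf ζ (FCAux.trm ε H) := hcomp
  have hHpow : ∀ j : ℕ, FCAux.LB (H ^ (j + 1)) (-(j + 1 : ℤ)) := by
    intro j
    exact (hHLB.pow (j + 1)).mono (by push_cast; omega)
  have hsum : ∀ j : ℕ, IsSumOf (ζ ^ (j + 1)) (FCAux.trm ε (H ^ (j + 1))) := by
    intro j
    induction j with
    | zero =>
      rw [pow_one, pow_one]
      exact hcomp'
    | succ n ih =>
      have h := FCAux.isSumOf_mul hεLB (hHpow n) hHLB ih hcomp'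
      rw [← pow_succ, ← pow_succ] at h
      exact h
  obtain ⟨j, rfl⟩ : ∃ j, k = j + 1 := ⟨k - 1, by omega⟩
  have hres : ((ζ ^ (j + 1)) * (1 + derivZ ε)).coeff 1 = (H ^ (j + 1)).coeff 1 :=
    FCAux.residue_of_isSumOf hεLB (hHpow j) (hsum j)
  set k := j + 1 with hk_def
  have hζk : ζ ^ k = HahnSeries.single (-(k : ℤ)) (1 : A) := by
    rw [hζ, HahnSeries.single_pow]
    norm_num
  have hLHS : ((ζ ^ k) * (1 + derivZ ε)).coeff 1 = (-(k : ℤ)) • R (k + 1) := by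
    rw [hζk]
    have h1 : (1 : ℤ) = ((k : ℤ) + 1) + (-(k : ℤ)) := by ring
    rw [h1, HahnSeries.coeff_single_mul_add, one_mul, hDL, FCAux.derivZ_coeff]
    have hk1 : ((k : ℤ) + 1 - 1) = (k : ℤ) := by ring
    rw [hk1, hL (k : ℤ), if_neg (by omega), if_pos (by exact_mod_cast hk)]
    have h2 : ((k : ℤ) + 1).toNat = k + 1 := by omega
    have h3 : (1 - ((k : ℤ) + 1)) = -(k : ℤ) := by ring
    rw [h2, h3]
  have hfinal : (-(k : ℤ)) • R (k + 1) = (H ^ k).coeff 1 := by rw [← hLHS, hres]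
  rw [← hfinal, ← Int.cast_smul_eq_zsmul ℚ, smul_smul]
  have hsc : -((k : ℚ))⁻¹ * ((-(k : ℤ) : ℤ) : ℚ) = 1 := by
    have hkQ : ((k : ℚ)) ≠ 0 := Nat.cast_ne_zero.mpr (by omega)
    push_cast
    field_simp
  rw [hsc, one_smul]
end
end

section
/- Invariance of the residue under change of variables: let A be a commutative ℚ-algebra, let f be a formal series at infinity over A, and let u(ζ) = ζ + (terms of degree ≤ 0) be a formal series at infinity with leading term ζ (so u is invertible for composition). Then [z^{-1}] f(z) = [ζ^{-1}] ( u'(ζ) · f(u(ζ)) ), where f(u(ζ)) := Σ_{r≥0} (u(ζ) - ζ)^r / r! · f^{(r)}(ζ) is the well-defined formal composition. -/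
noncomputable section

variable {A : Type*}

namespace ResidueAux

variable [CommRing A]

theorem derivZ_coeff (f : LaurentSeries A) (m : ℤ) :
    (derivZ f).coeff m = (1 - m) • f.coeff (m - 1) := rfl

theorem derivZ_add (a b : LaurentSeries A) : derivZ (a + b) = derivZ a + derivZ b := by
  ext m
  simp only [derivZ_coeff, HahnSeries.coeff_add, smul_add]

theorem derivZ_single_neg_one : derivZ (HahnSeries.single (-1 : ℤ) (1 : A)) = 1 := by
  ext m
  rw [derivZ_coeff, HahnSeries.coeff_single, HahnSeries.coeff_one]
  rcases eq_or_ne m 0 with rfl | hm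
  · norm_num
  · rw [if_neg hm, if_neg (show ¬(m - 1 = -1) by omega), smul_zero]

theorem res_derivZ (x : LaurentSeries A) : (derivZ x).coeff 1 = 0 := by
  rw [derivZ_coeff]
  norm_num

theorem mul_coeff_subset {x y : LaurentSeries A} {s t : Set ℤ}
    (hs : s.IsPWO) (ht : t.IsPWO) (hxs : x.support ⊆ s) (hyt : y.support ⊆ t) (a : ℤ) :
    (x * y).coeff a = ∑ ij ∈ Finset.addAntidiagonal hs ht a, x.coeff ij.1 * y.coeff ij.2 := by
  rw [HahnSeries.coeff_mul_left' hs hxs]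
  refine Finset.sum_subset (Finset.addAntidiagonal_mono_right hyt) ?_
  intro ij hij hij'
  rcases Finset.mem_addAntidiagonal.mp hij with ⟨h1, _, h3⟩
  by_cases hy : y.coeff ij.2 = 0
  · rw [hy, mul_zero]
  · exact absurd (Finset.mem_addAntidiagonal.mpr ⟨h1, hy, h3⟩) hij'

theorem support_derivZ_subset (x : LaurentSeries A) :
    (derivZ x).support ⊆ (fun n : ℤ => n + 1) '' x.support := by
  intro m hm
  have hx : x.coeff (m - 1) ≠ 0 := by
    intro h
    exact hm (by rw [derivZ_coeff, h, smul_zero])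
  exact ⟨m - 1, hx, by ring⟩

theorem derivZ_mul (a b : LaurentSeries A) :
    derivZ (a * b) = derivZ a * b + a * derivZ b := by
  have hsa : ((fun n : ℤ => n + 1) '' a.support).IsPWO :=
    a.isPWO_support.image_of_monotone (fun _ _ hab => by simpa using hab)
  have hsb : ((fun n : ℤ => n + 1) '' b.support).IsPWO :=
    b.isPWO_support.image_of_monotone (fun _ _ hab => by simpa using hab)
  ext m
  rw [HahnSeries.coeff_add, derivZ_coeff, HahnSeries.coeff_mul,
    mul_coeff_subset hsa b.isPWO_support (support_derivZ_subset a) subset_rfl m,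
    mul_coeff_subset a.isPWO_support hsb subset_rfl (support_derivZ_subset b) m,
    Finset.smul_sum]
  have h1 : ∑ pq ∈ Finset.addAntidiagonal a.isPWO_support b.isPWO_support (m - 1),
      (-pq.1) • (a.coeff pq.1 * b.coeff pq.2)
      = ∑ ij ∈ Finset.addAntidiagonal hsa b.isPWO_support m,
        (derivZ a).coeff ij.1 * b.coeff ij.2 := by
    refine Finset.sum_nbij' (fun pq : ℤ × ℤ => (pq.1 + 1, pq.2))
      (fun ij : ℤ × ℤ => (ij.1 - 1, ij.2)) ?_ ?_ ?_ ?_ ?_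
    · intro pq hpq
      rcases Finset.mem_addAntidiagonal.mp hpq with ⟨hp, hq, hs⟩
      exact Finset.mem_addAntidiagonal.mpr ⟨⟨pq.1, hp, rfl⟩, hq, by omega⟩
    · intro ij hij
      rcases Finset.mem_addAntidiagonal.mp hij with ⟨hp, hq, hs⟩
      obtain ⟨p, hp', hpe⟩ := hp
      simp only at hpe
      refine Finset.mem_addAntidiagonal.mpr ⟨?_, hq, by omega⟩
      have hpeq : ij.1 - 1 = p := by omega
      rw [hpeq]
      exact hp'
    · intro pq _; simp
    · intro ij _; simp
    · intro pq _
      rw [derivZ_coeff, add_sub_cancel_right, smul_mul_assoc]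
      have : (1 : ℤ) - (pq.1 + 1) = -pq.1 := by omega
      rw [this]
  have h2 : ∑ pq ∈ Finset.addAntidiagonal a.isPWO_support b.isPWO_support (m - 1),
      (-pq.2) • (a.coeff pq.1 * b.coeff pq.2)
      = ∑ ij ∈ Finset.addAntidiagonal a.isPWO_support hsb m,
        a.coeff ij.1 * (derivZ b).coeff ij.2 := by
    refine Finset.sum_nbij' (fun pq : ℤ × ℤ => (pq.1, pq.2 + 1))
      (fun ij : ℤ × ℤ => (ij.1, ij.2 - 1)) ?_ ?_ ?_ ?_ ?_
    · intro pq hpq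
      rcases Finset.mem_addAntidiagonal.mp hpq with ⟨hp, hq, hs⟩
      exact Finset.mem_addAntidiagonal.mpr ⟨hp, ⟨pq.2, hq, rfl⟩, by omega⟩
    · intro ij hij
      rcases Finset.mem_addAntidiagonal.mp hij with ⟨hp, hq, hs⟩
      obtain ⟨q, hq', hqe⟩ := hq
      simp only at hqe
      refine Finset.mem_addAntidiagonal.mpr ⟨hp, ?_, by omega⟩
      have hqeq : ij.2 - 1 = q := by omega
      rw [hqeq]
      exact hq'
    · intro pq _; simp
    · intro ij _; simp
    · intro pq _
      rw [derivZ_coeff, add_sub_cancel_right, mul_smul_comm]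
      have : (1 : ℤ) - (pq.2 + 1) = -pq.2 := by omega
      rw [this]
  rw [← h1, ← h2, ← Finset.sum_add_distrib]
  refine Finset.sum_congr rfl fun pq hpq => ?_
  rcases Finset.mem_addAntidiagonal.mp hpq with ⟨_, _, hs⟩
  rw [← add_smul]
  congr 1
  omega

theorem derivZ_pow (a : LaurentSeries A) (n : ℕ) :
    derivZ (a ^ (n + 1)) = (n + 1) • (a ^ n * derivZ a) := by
  induction n with
  | zero => simp
  | succ n ih =>
    rw [pow_succ, derivZ_mul, ih, smul_mul_assoc, mul_assoc, mul_comm (derivZ a) a,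
      ← mul_assoc, ← pow_succ, succ_nsmul _ (n + 1)]

theorem coeff_sum {ι : Type*} (s : Finset ι) (F : ι → LaurentSeries A) (m : ℤ) :
    (∑ i ∈ s, F i).coeff m = ∑ i ∈ s, (F i).coeff m :=
  map_sum (AddMonoidHom.mk' (fun x : LaurentSeries A => x.coeff m)
    (fun _ _ => HahnSeries.coeff_add)) F s

theorem lb_mul {x y : LaurentSeries A} {c : ℤ} (hx : ∀ m : ℤ, m < 0 → x.coeff m = 0)
    (hy : ∀ m : ℤ, m < c → y.coeff m = 0) :
    ∀ m : ℤ, m < c → (x * y).coeff m = 0 := by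
  intro m hm
  rw [HahnSeries.coeff_mul]
  refine Finset.sum_eq_zero fun ij hij => ?_
  rcases Finset.mem_addAntidiagonal.mp hij with ⟨h1, h2, h3⟩
  simp only [HahnSeries.mem_support] at h1 h2
  by_cases hx1 : ij.1 < 0
  · exact absurd (hx _ hx1) h1
  · exact absurd (hy _ (by omega)) h2

theorem isPWO_Ici (c : ℤ) : (Set.Ici c).IsPWO := by
  have h : Set.Ici c = (fun n : ℕ => c + (n : ℤ)) '' Set.univ := by
    ext m
    simp only [Set.mem_Ici, Set.image_univ, Set.mem_range]
    constructor
    · intro h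
      obtain ⟨n, hn⟩ := Int.le.dest h
      exact ⟨n, hn⟩
    · rintro ⟨n, rfl⟩
      omega
  rw [h]
  exact ((Set.isWF_univ_iff.mpr (inferInstance : WellFoundedLT ℕ)).isPWO).image_of_monotone
    (fun a b hab => by omega)

theorem smul_mul [Algebra ℚ A] (q : ℚ) (x y : LaurentSeries A) :
    (q • x) * y = q • (x * y) := by
  have hsub : (q • x).support ⊆ x.support := by
    intro m hm
    intro h0
    exact hm (by rw [HahnSeries.coeff_smul, h0, smul_zero])
  ext m
  rw [HahnSeries.coeff_smul, mul_coeff_subset x.isPWO_support y.isPWO_support hsub subset_rfl m,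
    HahnSeries.coeff_mul, Finset.smul_sum]
  refine Finset.sum_congr rfl fun ij _ => ?_
  rw [HahnSeries.coeff_smul, smul_mul_assoc]

theorem support_subset_Ici {x : LaurentSeries A} {c : ℤ}
    (h : ∀ m : ℤ, m < c → x.coeff m = 0) : x.support ⊆ Set.Ici c :=
  fun m hm => le_of_not_gt fun hlt => hm (h m hlt)

end ResidueAux

open ResidueAux in
/-- Invariance of the residue under change of variables: if `f` is a
formal series at infinity over a commutative `ℚ`-algebra `A` and `u(ζ) = ζ + v(ζ)` with
`v` of degree `≤ 0` (no coefficients of `z^n` with `n ≥ 1`; in `w = 1/z` coordinates,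
`(u - ζ).coeff m = 0` for `m < 0`), and `g = f ∘ u = Σ_{r≥0} v^r/r! · f^{(r)}` is the
formal composition, then `[z^{-1}] f = [ζ^{-1}] (u' · f(u(ζ)))`.
(The residue `[z^{-1}]` is the coefficient of `w^1`.) -/
theorem residue_change_of_variables [CommRing A] [Algebra ℚ A]
    (f u g : LaurentSeries A)
    (hu : ∀ m : ℤ, m < 0 → (u - HahnSeries.single (-1) 1).coeff m = 0)
    (hg : IsSumOf g (fun r => ((Nat.factorial r : ℚ))⁻¹ •
      ((u - HahnSeries.single (-1) 1) ^ r * derivZ^[r] f))) :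
    f.coeff 1 = (derivZ u * g).coeff 1 := by
  classical
  set v : LaurentSeries A := u - HahnSeries.single (-1) 1 with hv
  set F : ℕ → LaurentSeries A :=
    fun r => ((Nat.factorial r : ℚ))⁻¹ • (v ^ r * derivZ^[r] f) with hF
  have hgF : ∀ m : ℤ, ∃ N : ℕ, ∀ n : ℕ, N ≤ n →
      g.coeff m = (∑ r ∈ Finset.range n, F r).coeff m := hg
  have hvlb : ∀ m : ℤ, m < 0 → v.coeff m = 0 := hu
  have husv : u = HahnSeries.single (-1) 1 + v := by rw [hv]; ring
  have hDu : derivZ u = 1 + derivZ v := by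
    rw [husv, derivZ_add, derivZ_single_neg_one]
  -- per-term residue identity
  have key : ∀ r : ℕ, (derivZ u * F r).coeff 1 = (F r).coeff 1 - (F (r + 1)).coeff 1 := by
    intro r
    have h0 : ((r + 1) • (v ^ r * derivZ v) * derivZ^[r] f
        + v ^ (r + 1) * derivZ (derivZ^[r] f)).coeff 1 = 0 := by
      rw [← derivZ_pow, ← derivZ_mul]
      exact res_derivZ _
    rw [HahnSeries.coeff_add, smul_mul_assoc,
      ← Function.iterate_succ_apply' derivZ r f] at h0
    rw [show ((r + 1) • (v ^ r * derivZ v * derivZ^[r] f))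
        = ((r : ℚ) + 1) • (v ^ r * derivZ v * derivZ^[r] f) by
      rw [← Nat.cast_smul_eq_nsmul ℚ]; norm_cast, HahnSeries.coeff_smul] at h0
    have hX : ((r : ℚ) + 1) • (v ^ r * derivZ v * derivZ^[r] f).coeff 1
        = -(v ^ (r + 1) * derivZ^[r + 1] f).coeff 1 :=
      eq_neg_of_add_eq_zero_left h0
    have hsplit : derivZ u * F r = F r + derivZ v * F r := by rw [hDu]; ring
    have hDvF : derivZ v * F r
        = ((Nat.factorial r : ℚ))⁻¹ • (v ^ r * derivZ v * derivZ^[r] f) := by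
      rw [hF, mul_comm, smul_mul]
      congr 1
      ring
    have hFr1 : (F (r + 1)).coeff 1
        = ((Nat.factorial (r + 1) : ℚ))⁻¹ • (v ^ (r + 1) * derivZ^[r + 1] f).coeff 1 := by
      rw [hF, HahnSeries.coeff_smul]
    have hY : (v ^ (r + 1) * derivZ^[r + 1] f).coeff 1
        = -(((r : ℚ) + 1) • (v ^ r * derivZ v * derivZ^[r] f).coeff 1) := by
      rw [hX, neg_neg]
    have hfac : ((Nat.factorial (r + 1) : ℚ))⁻¹ * ((r : ℚ) + 1)
        = ((Nat.factorial r : ℚ))⁻¹ := by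
      have h2 : ((Nat.factorial r : ℚ)) ≠ 0 := Nat.cast_ne_zero.mpr r.factorial_ne_zero
      have h1 : ((r : ℚ) + 1) ≠ 0 := by positivity
      rw [Nat.factorial_succ]
      push_cast
      field_simp
    rw [hsplit, HahnSeries.coeff_add, hDvF, hFr1, hY, smul_neg, smul_smul, hfac,
      sub_neg_eq_add, HahnSeries.coeff_smul, HahnSeries.coeff_smul]
  -- lower bounds on supports
  have hvpow : ∀ r : ℕ, ∀ m : ℤ, m < 0 → (v ^ r).coeff m = 0 := by
    intro r
    induction r with
    | zero =>
      intro m hm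
      rw [pow_zero, HahnSeries.coeff_one, if_neg (by omega)]
    | succ n ih =>
      intro m hm
      rw [pow_succ]
      exact lb_mul ih hvlb m hm
  have hflb : ∀ m : ℤ, m < f.order → f.coeff m = 0 :=
    fun m hm => HahnSeries.coeff_eq_zero_of_lt_order hm
  set c : ℤ := f.order with hc
  have hDrf : ∀ r : ℕ, ∀ m : ℤ, m < c → (derivZ^[r] f).coeff m = 0 := by
    intro r
    induction r with
    | zero => exact hflb
    | succ n ih =>
      intro m hm
      rw [Function.iterate_succ_apply', derivZ_coeff, ih _ (by omega), smul_zero]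
  have hFlb : ∀ r : ℕ, ∀ m : ℤ, m < c → (F r).coeff m = 0 := by
    intro r m hm
    rw [hF, HahnSeries.coeff_smul, lb_mul (hvpow r) (hDrf r) m hm, smul_zero]
  have hSlb : ∀ n : ℕ, ∀ m : ℤ, m < c → (∑ r ∈ Finset.range n, F r).coeff m = 0 := by
    intro n m hm
    rw [coeff_sum]
    exact Finset.sum_eq_zero fun r _ => hFlb r m hm
  have hglb : ∀ m : ℤ, m < c → g.coeff m = 0 := by
    intro m hm
    obtain ⟨N, hN⟩ := hgF m
    rw [hN N le_rfl]
    exact hSlb N m hm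
  have hDulb : ∀ m : ℤ, m < 0 → (derivZ u).coeff m = 0 := by
    intro m hm
    rw [derivZ_coeff]
    have hu0 : u.coeff (m - 1) = 0 := by
      rw [husv, HahnSeries.coeff_add, HahnSeries.coeff_single,
        if_neg (show ¬(m - 1 = -1) by omega), hvlb _ (by omega), add_zero]
    rw [hu0, smul_zero]
  -- assemble
  choose N hN using hgF
  set T : Finset (ℤ × ℤ) :=
    Finset.addAntidiagonal (isPWO_Ici (0 : ℤ)) (isPWO_Ici c) (1 : ℤ) with hT
  obtain ⟨n, hn1, hn2⟩ : ∃ n : ℕ, N 1 ≤ n ∧ ∀ ij ∈ T, N ij.2 ≤ n :=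
    ⟨max (N 1) (T.sup fun ij => N ij.2), le_max_left _ _,
      fun ij hij => le_trans (Finset.le_sup (f := fun ij => N ij.2) hij) (le_max_right _ _)⟩
  have hmulg : (derivZ u * g).coeff 1
      = ∑ ij ∈ T, (derivZ u).coeff ij.1 * g.coeff ij.2 :=
    mul_coeff_subset _ _ (support_subset_Ici hDulb) (support_subset_Ici hglb) 1
  have hmulS : (derivZ u * ∑ r ∈ Finset.range n, F r).coeff 1
      = ∑ ij ∈ T, (derivZ u).coeff ij.1 * (∑ r ∈ Finset.range n, F r).coeff ij.2 :=
    mul_coeff_subset _ _ (support_subset_Ici hDulb) (support_subset_Ici (hSlb n)) 1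
  have hsame : (derivZ u * g).coeff 1 = (derivZ u * ∑ r ∈ Finset.range n, F r).coeff 1 := by
    rw [hmulg, hmulS]
    refine Finset.sum_congr rfl fun ij hij => ?_
    rw [hN ij.2 n (hn2 ij hij)]
  have hexp : (derivZ u * ∑ r ∈ Finset.range n, F r).coeff 1
      = ∑ r ∈ Finset.range n, (derivZ u * F r).coeff 1 := by
    rw [Finset.mul_sum, coeff_sum]
  have htel : ∑ r ∈ Finset.range n, (derivZ u * F r).coeff 1
      = (F 0).coeff 1 - (F n).coeff 1 := by
    rw [Finset.sum_congr rfl fun r _ => key r]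
    exact Finset.sum_range_sub' (fun r => (F r).coeff 1) n
  have hFn : (F n).coeff 1 = 0 := by
    have h1 : g.coeff 1 = (∑ r ∈ Finset.range n, F r).coeff 1 := hN 1 n hn1
    have h2 : g.coeff 1 = (∑ r ∈ Finset.range (n + 1), F r).coeff 1 :=
      hN 1 (n + 1) (le_trans hn1 (Nat.le_succ n))
    have h3 := h2.symm.trans h1
    rw [Finset.sum_range_succ, HahnSeries.coeff_add] at h3
    have h4 : (∑ r ∈ Finset.range n, F r).coeff 1 + (F n).coeff 1
        = (∑ r ∈ Finset.range n, F r).coeff 1 + 0 := by rw [add_zero]; exact h3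
    exact add_left_cancel h4
  have hF0 : (F 0).coeff 1 = f.coeff 1 := by
    rw [hF]
    simp [Nat.factorial]
  rw [hsame, hexp, htel, hFn, hF0, sub_zero]
end
end

section
/- Polynomiality of Kerov polynomials: let A = ℚ[R_2, R_3, R_4, …] be the polynomial ring over ℚ in countably many indeterminates, L(ζ) = ζ + Σ_{j≥2} R_j ζ^{1-j}, H the compositional inverse of L, and Σ_k := -(1/k) [z^{-1}] H(z) H(z-1) ⋯ H(z-k+1) ∈ A. Then for every integer k ≥ 1, Σ_k lies in the subring ℚ[R_2, …, R_{k+1}]; i.e. Σ_k is a polynomial with rational coefficients in the free cumulants R_2, …, R_{k+1} only. -/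
noncomputable section

variable {A : Type*}

/-- The free cumulant indeterminates: `Rvar j = R_j` for `j ≥ 2` in the polynomial ring
`ℚ[R_2, R_3, R_4, …]`, modeled as `MvPolynomial {n : ℕ // 2 ≤ n} ℚ`. -/
noncomputable def Rvar (j : ℕ) : MvPolynomial {n : ℕ // 2 ≤ n} ℚ :=
  if h : 2 ≤ j then MvPolynomial.X ⟨j, h⟩ else 0

/-! ### Auxiliary material -/

abbrev KA := MvPolynomial {n : ℕ // 2 ≤ n} ℚ

/-- The subalgebra generated by `R_2, …, R_t`. -/
noncomputable def SAlg (t : ℤ) : Subalgebra ℚ KA :=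
  Algebra.adjoin ℚ (Rvar '' {j : ℕ | 2 ≤ j ∧ (j : ℤ) ≤ t})

lemma SAlg_mono {t t' : ℤ} (h : t ≤ t') : SAlg t ≤ SAlg t' :=
  Algebra.adjoin_mono (Set.image_mono fun j hj => ⟨hj.1, hj.2.trans h⟩)

lemma Rvar_mem {j : ℕ} {t : ℤ} (h2 : 2 ≤ j) (hle : (j : ℤ) ≤ t) : Rvar j ∈ SAlg t :=
  Algebra.subset_adjoin ⟨j, ⟨h2, hle⟩, rfl⟩

lemma derivZ_coeff [CommRing A] (f : LaurentSeries A) (m : ℤ) :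
    (derivZ f).coeff m = (1 - m) • f.coeff (m - 1) := rfl

lemma coeff_sum [CommRing A] (F : ℕ → LaurentSeries A) (s : Finset ℕ) (m : ℤ) :
    (∑ r ∈ s, F r).coeff m = ∑ r ∈ s, (F r).coeff m :=
  map_sum (HahnSeries.coeff.addMonoidHom m) _ _

lemma derivZ_iter_coeff [CommRing A] (f : LaurentSeries A) (r : ℕ) (m : ℤ) :
    ∃ c : ℤ, (derivZ^[r] f).coeff m = c • f.coeff (m - (r : ℤ)) := by
  induction r generalizing m with
  | zero => exact ⟨1, by simp⟩
  | succ r ih =>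
    obtain ⟨c, hc⟩ := ih (m - 1)
    refine ⟨(1 - m) * c, ?_⟩
    rw [Function.iterate_succ_apply', derivZ_coeff, hc, smul_smul]
    congr 2
    push_cast
    ring

section Main

variable (B : ℕ → KA) (H L : LaurentSeries KA)

lemma H_coeff_mem (hH : ∀ m : ℤ, H.coeff m =
      if m = -1 then 1 else if 1 ≤ m then -B (m + 1).toNat else 0)
    {t : ℤ} (HB : ∀ j : ℕ, 2 ≤ j → (j : ℤ) ≤ t → B j ∈ SAlg t)
    {m : ℤ} (hm : m ≤ t - 1) : H.coeff m ∈ SAlg t := by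
  rw [hH]
  split_ifs with h1 h2
  · exact one_mem _
  · exact neg_mem (HB _ (by omega) (by omega))
  · exact zero_mem _

lemma H_coeff_eq_zero (hH : ∀ m : ℤ, H.coeff m =
      if m = -1 then 1 else if 1 ≤ m then -B (m + 1).toNat else 0)
    {m : ℤ} (hm : m ≤ -2) : H.coeff m = 0 := by
  rw [hH, if_neg (by omega), if_neg (by omega)]

lemma Lp_coeff (hL : ∀ m : ℤ, L.coeff m =
      if m = -1 then 1 else if 1 ≤ m then Rvar (m + 1).toNat else 0)
    (m : ℤ) : (L - HahnSeries.single (-1) 1).coeff m =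
      if 1 ≤ m then Rvar (m + 1).toNat else 0 := by
  rw [HahnSeries.coeff_sub, hL, HahnSeries.coeff_single]
  by_cases h1 : m = -1
  · rw [if_pos h1, if_pos h1, if_neg (by omega)]
    ring
  · rw [if_neg h1, if_neg h1, sub_zero]

lemma Lpow_coeff_mem (hL : ∀ m : ℤ, L.coeff m =
      if m = -1 then 1 else if 1 ≤ m then Rvar (m + 1).toNat else 0)
    (s : ℕ) (p : ℤ) :
    ((L - HahnSeries.single (-1) 1) ^ s).coeff p ∈ SAlg (p - s + 2) ∧
      (p < (s : ℤ) → ((L - HahnSeries.single (-1) 1) ^ s).coeff p = 0) := by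
  induction s generalizing p with
  | zero =>
    rw [pow_zero, HahnSeries.coeff_one]
    constructor
    · split_ifs
      · exact one_mem _
      · exact zero_mem _
    · intro hp
      rw [if_neg (by omega)]
  | succ s ih =>
    rw [pow_succ, HahnSeries.coeff_mul]
    constructor
    · refine Subalgebra.sum_mem _ fun ij hij => ?_
      rw [Finset.mem_addAntidiagonal] at hij
      obtain ⟨hij1, hij2, hijsum⟩ := hij
      have h1 : ¬ ((ij.1 : ℤ) < (s : ℤ)) := fun h => hij1 ((ih ij.1).2 h)
      have h2 : (1 : ℤ) ≤ ij.2 := by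
        by_contra h
        exact hij2 (by rw [Lp_coeff L hL, if_neg h])
      rw [Lp_coeff L hL, if_pos h2]
      have hm2 : Rvar (ij.2 + 1).toNat ∈ SAlg (ij.2 + 1) := Rvar_mem (by omega) (by omega)
      exact mul_mem (SAlg_mono (t := ij.1 - s + 2) (by push_cast; omega) ((ih ij.1).1))
        (SAlg_mono (t := ij.2 + 1) (by push_cast; omega) hm2)
    · intro hp
      refine Finset.sum_eq_zero fun ij hij => ?_
      rw [Finset.mem_addAntidiagonal] at hij
      obtain ⟨hij1, hij2, hijsum⟩ := hij
      by_cases h1 : (ij.1 : ℤ) < (s : ℤ)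
      · rw [(ih ij.1).2 h1, zero_mul]
      · rw [Lp_coeff L hL, if_neg (by push_cast at hp ⊢; omega), mul_zero]

lemma B_mem (hH : ∀ m : ℤ, H.coeff m =
      if m = -1 then 1 else if 1 ≤ m then -B (m + 1).toNat else 0)
    (hL : ∀ m : ℤ, L.coeff m =
      if m = -1 then 1 else if 1 ≤ m then Rvar (m + 1).toNat else 0)
    (hcomp : IsSumOf (HahnSeries.single (-1) 1)
      (fun s => ((Nat.factorial s : ℚ))⁻¹ •
        ((L - HahnSeries.single (-1) 1) ^ s * derivZ^[s] H)))
    (m : ℕ) : 2 ≤ m → B m ∈ SAlg m := by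
  induction m using Nat.strong_induction_on with
  | _ m IH =>
  intro hm
  obtain ⟨N, hN⟩ := hcomp ((m : ℤ) - 1)
  have h0 := hN (max N 1) (le_max_left _ _)
  rw [HahnSeries.coeff_single, if_neg (by omega), coeff_sum] at h0
  have hins : Finset.range (max N 1) = insert 0 (Finset.Ico 1 (max N 1)) := by
    ext x
    simp only [Finset.mem_range, Finset.mem_insert, Finset.mem_Ico]
    omega
  rw [hins, Finset.sum_insert (by simp)] at h0
  have hF0 : (((Nat.factorial 0 : ℚ))⁻¹ •
      ((L - HahnSeries.single (-1) 1) ^ 0 * derivZ^[0] H)).coeff ((m : ℤ) - 1) = -B m := by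
    have htn : (((m : ℤ) - 1 + 1)).toNat = m := by omega
    simp only [Nat.factorial_zero, Nat.cast_one, inv_one, one_smul, pow_zero, one_mul,
      Function.iterate_zero, id_eq]
    rw [hH, if_neg (by omega), if_pos (by omega), htn]
  rw [hF0] at h0
  have hT : ∀ s ∈ Finset.Ico 1 (max N 1),
      (((Nat.factorial s : ℚ))⁻¹ •
        ((L - HahnSeries.single (-1) 1) ^ s * derivZ^[s] H)).coeff ((m : ℤ) - 1)
        ∈ SAlg m := by
    intro s hs
    rw [Finset.mem_Ico] at hs
    rw [HahnSeries.coeff_smul]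
    refine Subalgebra.smul_mem _ ?_ _
    rw [HahnSeries.coeff_mul]
    refine Subalgebra.sum_mem _ fun ij hij => ?_
    rw [Finset.mem_addAntidiagonal] at hij
    obtain ⟨hij1, hij2, hijsum⟩ := hij
    have h1 : ¬ ((ij.1 : ℤ) < (s : ℤ)) := fun h => hij1 ((Lpow_coeff_mem L hL s ij.1).2 h)
    obtain ⟨c, hc⟩ := derivZ_iter_coeff H s ij.2
    have h2 : -1 ≤ ij.2 - (s : ℤ) := by
      by_contra h
      exact hij2 (by rw [hc, H_coeff_eq_zero B H hH (by omega), smul_zero])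
    have HB : ∀ j : ℕ, 2 ≤ j → (j : ℤ) ≤ (m : ℤ) - 1 → B j ∈ SAlg ((m : ℤ) - 1) :=
      fun j hj2 hjle => SAlg_mono (by omega) (IH j (by omega) hj2)
    refine mul_mem (SAlg_mono (t := ij.1 - s + 2) (by omega) ((Lpow_coeff_mem L hL s ij.1).1))
      ?_
    rw [hc]
    refine SAlg_mono (t := (m : ℤ) - 1) (by omega) ?_
    exact Subalgebra.zsmul_mem _ (H_coeff_mem B H hH HB (by omega)) c
  have hBm : B m = ∑ s ∈ Finset.Ico 1 (max N 1),
      (((Nat.factorial s : ℚ))⁻¹ •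
        ((L - HahnSeries.single (-1) 1) ^ s * derivZ^[s] H)).coeff ((m : ℤ) - 1) := by
    linear_combination h0
  rw [hBm]
  exact Subalgebra.sum_mem _ hT

end Main

/-- Polynomiality of Kerov polynomials: over the polynomial ring
`A = ℚ[R_2, R_3, …]`, with `L(ζ) = ζ + Σ_{j≥2} R_j ζ^{1-j}`, `H` the compositional
inverse of `L`, and `Σ_k = -(1/k)[z^{-1}] H(z) H(z-1) ⋯ H(z-k+1)` (where
`H(z-j) = Σ_{r≥0} ((-j)^r/r!) H^{(r)}(z)`), the element `Σ_k` lies in the `ℚ`-subalgebra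
generated by `R_2, …, R_{k+1}`, for every `k ≥ 1`. -/
theorem kerov_polynomiality
    (B : ℕ → MvPolynomial {n : ℕ // 2 ≤ n} ℚ)
    (H L : LaurentSeries (MvPolynomial {n : ℕ // 2 ≤ n} ℚ))
    (Hshift : ℕ → LaurentSeries (MvPolynomial {n : ℕ // 2 ≤ n} ℚ))
    (hH : ∀ m : ℤ, H.coeff m =
      if m = -1 then 1 else if 1 ≤ m then -B (m + 1).toNat else 0)
    (hL : ∀ m : ℤ, L.coeff m =
      if m = -1 then 1 else if 1 ≤ m then Rvar (m + 1).toNat else 0)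
    (hcomp : IsSumOf (HahnSeries.single (-1) 1)
      (fun s => ((Nat.factorial s : ℚ))⁻¹ •
        ((L - HahnSeries.single (-1) 1) ^ s * derivZ^[s] H)))
    (hHshift : ∀ j : ℕ, IsSumOf (Hshift j)
      (fun r => ((-(j : ℚ)) ^ r / (Nat.factorial r : ℚ)) • derivZ^[r] H))
    (k : ℕ) (hk : 1 ≤ k) :
    -((k : ℚ))⁻¹ • (∏ j ∈ Finset.range k, Hshift j).coeff 1 ∈
      Algebra.adjoin ℚ (Rvar '' {j : ℕ | 2 ≤ j ∧ j ≤ k + 1}) := by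
  have HBall : ∀ t : ℤ, ∀ j : ℕ, 2 ≤ j → (j : ℤ) ≤ t → B j ∈ SAlg t :=
    fun t j hj2 hjle => SAlg_mono (by omega) (B_mem B H L hH hL hcomp j hj2)
  -- coefficients of the shifted series
  have hshift : ∀ j : ℕ, ∀ m : ℤ, ((Hshift j).coeff m ∈ SAlg (m + 1)) ∧
      (m ≤ -2 → (Hshift j).coeff m = 0) := by
    intro j m
    obtain ⟨N, hN⟩ := hHshift j m
    have h := hN N le_rfl
    rw [coeff_sum] at h
    rw [h]
    constructor
    · refine Subalgebra.sum_mem _ fun r _ => ?_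
      rw [HahnSeries.coeff_smul]
      obtain ⟨c, hc⟩ := derivZ_iter_coeff H r m
      rw [hc]
      exact Subalgebra.smul_mem _
        (Subalgebra.zsmul_mem _
          (H_coeff_mem B H hH (HBall (m + 1)) (by omega)) c) _
    · intro hm
      refine Finset.sum_eq_zero fun r _ => ?_
      obtain ⟨c, hc⟩ := derivZ_iter_coeff H r m
      rw [HahnSeries.coeff_smul, hc, H_coeff_eq_zero B H hH (by omega), smul_zero, smul_zero]
  -- the product
  have hprod : ∀ t : ℕ, ∀ p : ℤ,
      ((∏ j ∈ Finset.range t, Hshift j).coeff p ∈ SAlg (p + t)) ∧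
        (p + (t : ℤ) < 0 → (∏ j ∈ Finset.range t, Hshift j).coeff p = 0) := by
    intro t
    induction t with
    | zero =>
      intro p
      rw [Finset.prod_range_zero, HahnSeries.coeff_one]
      constructor
      · split_ifs
        · exact one_mem _
        · exact zero_mem _
      · intro hp
        rw [if_neg (by omega)]
    | succ t ih =>
      intro p
      rw [Finset.prod_range_succ, HahnSeries.coeff_mul]
      constructor
      · refine Subalgebra.sum_mem _ fun ij hij => ?_
        rw [Finset.mem_addAntidiagonal] at hij
        obtain ⟨hij1, hij2, hijsum⟩ := hij
        have h1 : ¬ (ij.1 + (t : ℤ) < 0) := fun h => hij1 ((ih ij.1).2 h)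
        have h2 : ¬ (ij.2 ≤ -2) := fun h => hij2 ((hshift t ij.2).2 h)
        exact mul_mem
          (SAlg_mono (t := ij.1 + t) (by push_cast; omega) ((ih ij.1).1))
          (SAlg_mono (t := ij.2 + 1) (by push_cast; omega) ((hshift t ij.2).1))
      · intro hp
        refine Finset.sum_eq_zero fun ij hij => ?_
        rw [Finset.mem_addAntidiagonal] at hij
        obtain ⟨hij1, hij2, hijsum⟩ := hij
        by_cases h2 : ij.2 ≤ -2
        · rw [(hshift t ij.2).2 h2, mul_zero]
        · rw [(ih ij.1).2 (by push_cast at hp ⊢; omega), zero_mul]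
  have hmem : (∏ j ∈ Finset.range k, Hshift j).coeff 1 ∈ SAlg (1 + k) := (hprod k 1).1
  have hset : SAlg (1 + (k : ℤ)) =
      Algebra.adjoin ℚ (Rvar '' {j : ℕ | 2 ≤ j ∧ j ≤ k + 1}) := by
    unfold SAlg
    congr 1
    ext x
    constructor
    · rintro ⟨j, ⟨hj2, hjle⟩, rfl⟩
      exact ⟨j, ⟨hj2, by omega⟩, rfl⟩
    · rintro ⟨j, ⟨hj2, hjle⟩, rfl⟩
      exact ⟨j, ⟨hj2, by omega⟩, rfl⟩
  rw [← hset]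
  exact Subalgebra.smul_mem _ hmem _
end
end
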